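/- Let A be a subspace of the degree-2 homogeneous polynomials S²V* on a finite-dimensional vector space V, and define the p-th prolongation A^{(p)} = (A ⊗ S^p V*) ∩ S^{p+2} V*. Then every point of the k-th secant variety σ_k(Base(A)) of the base locus of A lies in the base locus of A^{(k-1)}; that is, every polynomial in A^{(k-1)} vanishes on any linear combination v_1 + ... + v_k of k points of the affine cone over Base(A). -/

import Mathlib

open MvPolynomial

/-- The directional derivative (polarization) of a polynomial `P` on `ℂⁿ` in direction `v`. -/
noncomputable def dirDeriv {n : ℕ} (v : Fin n → ℂ) (P : MvPolynomial (Fin n) ℂ) :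
    MvPolynomial (Fin n) ℂ :=
  ∑ i : Fin n, v i • MvPolynomial.pderiv i P

section Aux

variable {n : ℕ}

lemma dirDeriv_sum_right (v : Fin n → ℂ) {ι : Type*} (s : Finset ι)
    (F : ι → MvPolynomial (Fin n) ℂ) :
    dirDeriv v (∑ j ∈ s, F j) = ∑ j ∈ s, dirDeriv v (F j) := by
  simp only [dirDeriv, map_sum, Finset.smul_sum]
  exact Finset.sum_comm

lemma dirDeriv_sum_left {ι : Type*} (s : Finset ι) (w : ι → Fin n → ℂ)
    (P : MvPolynomial (Fin n) ℂ) :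
    dirDeriv (∑ j ∈ s, w j) P = ∑ j ∈ s, dirDeriv (w j) P := by
  simp only [dirDeriv, Finset.sum_apply, Finset.sum_smul]
  exact Finset.sum_comm

lemma pderiv_pderiv_comm (i j : Fin n) (P : MvPolynomial (Fin n) ℂ) :
    pderiv i (pderiv j P) = pderiv j (pderiv i P) := by
  induction P using MvPolynomial.induction_on with
  | C a => simp [pderiv_C]
  | add p q hp hq => simp [map_add, hp, hq]
  | mul_X p k hp =>
    simp only [pderiv_mul, map_add, pderiv_mul, hp]
    rcases eq_or_ne j k with rfl | hjk
    · rcases eq_or_ne i j with rfl | hij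
      · ring
      · simp only [pderiv_X_of_ne hij.symm, pderiv_X_self, pderiv_one, map_zero, mul_zero, add_zero, mul_one]
    · rcases eq_or_ne i k with rfl | hik
      · simp only [pderiv_X_of_ne hjk.symm, pderiv_X_self, pderiv_one, map_zero, mul_zero, add_zero, mul_one]
      · simp only [pderiv_X_of_ne hjk.symm, pderiv_X_of_ne hik.symm, map_zero, mul_zero, add_zero]

lemma dirDeriv_comm (v w : Fin n → ℂ) (P : MvPolynomial (Fin n) ℂ) :
    dirDeriv v (dirDeriv w P) = dirDeriv w (dirDeriv v P) := by
  have expand : ∀ (a b : Fin n → ℂ) (P : MvPolynomial (Fin n) ℂ),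
      dirDeriv a (dirDeriv b P)
        = ∑ i : Fin n, ∑ j : Fin n, a i • b j • pderiv i (pderiv j P) := by
    intro a b P
    simp only [dirDeriv, map_sum, Derivation.map_smul, Finset.smul_sum]
  rw [expand, expand, Finset.sum_comm]
  refine Finset.sum_congr rfl fun i _ => Finset.sum_congr rfl fun j _ => ?_
  rw [pderiv_pderiv_comm, smul_comm]

instance : LeftCommutative (dirDeriv (n := n)) := ⟨fun a b P => dirDeriv_comm a b P⟩

end Aux

section Euler

variable {n : ℕ}

lemma eval_monomial_univ (x : Fin n → ℂ) (m : Fin n →₀ ℕ) (c : ℂ) :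
    eval x (monomial m c) = c * ∏ i : Fin n, x i ^ m i := by
  rw [eval_monomial, Finsupp.prod_pow]

lemma eval_dirDeriv_monomial (x : Fin n → ℂ) (m : Fin n →₀ ℕ) (c : ℂ) :
    eval x (dirDeriv x (monomial m c))
      = ((∑ i : Fin n, m i : ℕ) : ℂ) * eval x (monomial m c) := by
  have hterm : ∀ i : Fin n,
      x i * eval x (pderiv i (monomial m c)) = (m i : ℂ) * eval x (monomial m c) := by
    intro i
    rw [pderiv_monomial, eval_monomial_univ, eval_monomial_univ]
    rcases Nat.eq_zero_or_pos (m i) with h | h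
    · simp [h]
    · set m' : Fin n →₀ ℕ := m - Finsupp.single i 1 with hm'
      have hsub : ∀ j : Fin n, j ≠ i → m' j = m j := by
        intro j hj
        rw [hm', Finsupp.tsub_apply, Finsupp.single_apply, if_neg fun e => hj e.symm,
          Nat.sub_zero]
      have hsubi : m' i = m i - 1 := by
        rw [hm', Finsupp.tsub_apply, Finsupp.single_eq_same]
      have hprod : x i * ∏ j : Fin n, x j ^ m' j = ∏ j : Fin n, x j ^ m j := by
        rw [← Finset.mul_prod_erase Finset.univ (fun j => x j ^ m' j) (Finset.mem_univ i),
            ← Finset.mul_prod_erase Finset.univ (fun j => x j ^ m j) (Finset.mem_univ i),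
            hsubi, ← mul_assoc]
        congr 1
        · rw [← pow_succ', Nat.sub_add_cancel h]
        · exact Finset.prod_congr rfl fun j hj => by
            rw [hsub j (Finset.ne_of_mem_erase hj)]
      calc x i * (c * (m i : ℂ) * ∏ j : Fin n, x j ^ m' j)
          = (m i : ℂ) * (c * (x i * ∏ j : Fin n, x j ^ m' j)) := by ring
        _ = (m i : ℂ) * (c * ∏ j : Fin n, x j ^ m j) := by rw [hprod]
  calc eval x (dirDeriv x (monomial m c))
      = ∑ i : Fin n, x i * eval x (pderiv i (monomial m c)) := by
        simp [dirDeriv, map_sum, smul_eval]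
    _ = ∑ i : Fin n, (m i : ℂ) * eval x (monomial m c) := by
        exact Finset.sum_congr rfl fun i _ => hterm i
    _ = ((∑ i : Fin n, m i : ℕ) : ℂ) * eval x (monomial m c) := by
        rw [← Finset.sum_mul]
        push_cast
        ring

lemma degree_eq_sum_univ (m : Fin n →₀ ℕ) : m.degree = ∑ i : Fin n, m i := by
  rw [Finsupp.degree]
  exact Finset.sum_subset (Finset.subset_univ _) (fun i _ hi => by
    simpa using Finsupp.notMem_support_iff.mp hi)

lemma euler {P : MvPolynomial (Fin n) ℂ} {d : ℕ} (hP : P.IsHomogeneous d) (x : Fin n → ℂ) :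
    eval x (dirDeriv x P) = (d : ℂ) * eval x P := by
  conv_lhs => rw [P.as_sum]
  conv_rhs => rw [P.as_sum]
  rw [dirDeriv_sum_right, map_sum, map_sum, Finset.mul_sum]
  refine Finset.sum_congr rfl fun m hm => ?_
  rw [eval_dirDeriv_monomial]
  have : (∑ i : Fin n, m i) = d := by
    rw [← degree_eq_sum_univ, Finsupp.degree_eq_weight_one]
    exact hP (mem_support_iff.mp hm)
  rw [this]

end Euler

section Homog

variable {n : ℕ}

lemma degree_add' (a b : Fin n →₀ ℕ) : (a + b).degree = a.degree + b.degree := by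
  simp [degree_eq_sum_univ, Finsupp.add_apply, Finset.sum_add_distrib]

lemma pderiv_monomial_isHomogeneous {m : Fin n →₀ ℕ} {c : ℂ} {d : ℕ}
    (hm : m.degree = d + 1) (i : Fin n) :
    (pderiv i (monomial m c)).IsHomogeneous d := by
  rw [pderiv_monomial]
  rcases Nat.eq_zero_or_pos (m i) with h | h
  · rw [h]
    norm_num
    exact isHomogeneous_zero _ _ _
  · apply isHomogeneous_monomial
    have hle : Finsupp.single i 1 ≤ m := by
      rw [Finsupp.single_le_iff]
      exact h
    have hadd : (m - Finsupp.single i 1) + Finsupp.single i 1 = m :=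
      tsub_add_cancel_of_le hle
    have hdeg : (m - Finsupp.single i 1).degree + (Finsupp.single i 1).degree = d + 1 := by
      rw [← degree_add', hadd, hm]
    have hsingle : (Finsupp.single i 1).degree = 1 := by
      exact Finsupp.degree_single i 1
    omega

lemma IsHomogeneousDirDeriv {P : MvPolynomial (Fin n) ℂ} {d : ℕ}
    (hP : P.IsHomogeneous (d + 1)) (v : Fin n → ℂ) :
    (dirDeriv v P).IsHomogeneous d := by
  conv_lhs => rw [P.as_sum]
  rw [dirDeriv_sum_right]
  apply MvPolynomial.IsHomogeneous.sum
  intro m hm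
  rw [dirDeriv]
  apply MvPolynomial.IsHomogeneous.sum
  intro i _
  have hmd : m.degree = d + 1 := by
    rw [Finsupp.degree_eq_weight_one]
    exact hP (mem_support_iff.mp hm)
  have := pderiv_monomial_isHomogeneous (c := coeff m P) hmd i
  simpa [smul_eq_C_mul] using this.C_mul (v i)

lemma eval_iterate_dirDeriv (x : Fin n → ℂ) :
    ∀ (d : ℕ) (P : MvPolynomial (Fin n) ℂ), P.IsHomogeneous d →
      eval x ((dirDeriv x)^[d] P) = (d.factorial : ℂ) * eval x P := by
  intro d
  induction d with
  | zero => intro P _; simp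
  | succ d ih =>
    intro P hP
    rw [Function.iterate_succ_apply, ih _ (IsHomogeneousDirDeriv hP x), euler hP x,
      Nat.factorial_succ]
    push_cast
    ring

end Homog

section Expand

variable {n : ℕ}

lemma iterate_dirDeriv_sum_eq {k : ℕ} (v : Fin k → (Fin n → ℂ)) (m : ℕ)
    (Q : MvPolynomial (Fin n) ℂ) :
    (dirDeriv (∑ i, v i))^[m] Q
      = ∑ s : Fin m → Fin k, (List.ofFn (fun j => v (s j))).foldr dirDeriv Q := by
  induction m with
  | zero =>
    simp only [Function.iterate_zero_apply, List.ofFn_zero, List.foldr_nil]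
    rw [Fintype.sum_unique]
  | succ m ih =>
    rw [Function.iterate_succ_apply', ih, dirDeriv_sum_right]
    have hterm : ∀ (i : Fin k) (s : Fin m → Fin k),
        dirDeriv (v i) ((List.ofFn (fun j => v (s j))).foldr dirDeriv Q)
          = (List.ofFn (fun j => v ((Fin.cons i s : Fin (m + 1) → Fin k) j))).foldr dirDeriv Q := by
      intro i s
      rw [List.ofFn_succ]
      simp [Fin.cons_zero, Fin.cons_succ]
    calc ∑ s : Fin m → Fin k, dirDeriv (∑ i, v i) ((List.ofFn fun j => v (s j)).foldr dirDeriv Q)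
        = ∑ s : Fin m → Fin k, ∑ i : Fin k,
            (List.ofFn (fun j => v ((Fin.cons i s : Fin (m + 1) → Fin k) j))).foldr dirDeriv Q := by
          refine Finset.sum_congr rfl fun s _ => ?_
          rw [dirDeriv_sum_left]
          exact Finset.sum_congr rfl fun i _ => hterm i s
      _ = ∑ p : (Fin k) × (Fin m → Fin k),
            (List.ofFn (fun j => v ((Fin.cons p.1 p.2 : Fin (m + 1) → Fin k) j))).foldr dirDeriv Q := by
          rw [Fintype.sum_prod_type]
          exact Finset.sum_comm
      _ = ∑ s : Fin (m + 1) → Fin k, (List.ofFn (fun j => v (s j))).foldr dirDeriv Q := by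
          apply Fintype.sum_equiv (Fin.consEquiv (fun _ => Fin k))
          intro p
          rfl

lemma ofFn_get_cast {α : Type*} (l : List α) (m : ℕ) (h : l.length = m) :
    List.ofFn (fun i : Fin m => l.get (Fin.cast h.symm i)) = l := by
  subst h
  exact List.ofFn_get l

lemma homog_zero_eval {P : MvPolynomial (Fin n) ℂ} (hP : P.IsHomogeneous 0)
    (x y : Fin n → ℂ) : eval x P = eval y P := by
  have : P = C (coeff 0 P) := by
    have h1 := homogeneousComponent_of_mem (m := 0) (n := 0)
      ((mem_homogeneousSubmodule 0 P).mpr hP)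
    rw [if_pos rfl] at h1
    conv_lhs => rw [← h1, homogeneousComponent_zero]
  have e : ∀ z : Fin n → ℂ, eval z P = coeff 0 P := by
    intro z
    conv_lhs => rw [this]
    simp
  rw [e x, e y]

end Expand

/-- The `p`-th prolongation `A^(p)` of a space of quadrics `A ⊆ S²V*`: the homogeneous
polynomials of degree `p + 2` all of whose `p`-fold iterated polarizations lie in `A`. -/
def prolongation {n : ℕ} (A : Submodule ℂ (MvPolynomial (Fin n) ℂ)) (p : ℕ) :
    Set (MvPolynomial (Fin n) ℂ) :=
  {Q | Q.IsHomogeneous (p + 2) ∧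
    ∀ vs : Fin p → (Fin n → ℂ), (List.ofFn vs).foldr dirDeriv Q ∈ A}

/-- Prolongation property: if `A ⊆ S²V*` is a system of quadrics, then every polynomial in the
`(k-1)`-st prolongation `A^(k-1)` vanishes on any sum `v₁ + ⋯ + v_k` of `k` points of the
affine cone over the base locus of `A`; i.e. `σ_k(Base A) ⊆ Base (A^(k-1))`. -/
theorem secant_subset_base_prolongation {n : ℕ} (A : Submodule ℂ (MvPolynomial (Fin n) ℂ))
    (hA : ∀ P ∈ A, MvPolynomial.IsHomogeneous P 2) (k : ℕ) (hk : 1 ≤ k)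
    (Q : MvPolynomial (Fin n) ℂ) (hQ : Q ∈ prolongation A (k - 1))
    (v : Fin k → (Fin n → ℂ)) (hv : ∀ i, ∀ P ∈ A, MvPolynomial.eval (v i) P = 0) :
    MvPolynomial.eval (∑ i, v i) Q = 0 := by
  classical
  obtain ⟨hQh, hQp⟩ := hQ
  have hkk : k - 1 + 2 = k + 1 := by omega
  rw [hkk] at hQh
  set x : Fin n → ℂ := ∑ i, v i with hx
  have key : ((k + 1).factorial : ℂ) * eval x Q = 0 := by
    rw [← eval_iterate_dirDeriv x (k + 1) Q hQh, iterate_dirDeriv_sum_eq, map_sum]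
    apply Finset.sum_eq_zero
    intro s _
    set l : List (Fin n → ℂ) := List.ofFn (fun j => v (s j)) with hl
    -- `s` is not injective, so `l` has a duplicate
    have hnd : ¬ l.Nodup := by
      obtain ⟨i, j, hne, heq⟩ := Fintype.exists_ne_map_eq_of_card_lt s (by simp)
      rw [hl, List.nodup_ofFn]
      intro hinj
      exact hne (hinj (show v (s i) = v (s j) by rw [heq]))
    obtain ⟨a, ha⟩ := List.exists_duplicate_iff_not_nodup.mpr hnd
    have hmem : a ∈ l := ha.mem
    have hcount : 2 ≤ l.count a := List.duplicate_iff_two_le_count.mp ha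
    have hmem2 : a ∈ l.erase a := by
      rw [← List.count_pos_iff, List.count_erase_self]
      omega
    set t : List (Fin n → ℂ) := (l.erase a).erase a with ht
    have hperm : l.Perm (a :: a :: t) :=
      (List.perm_cons_erase hmem).trans ((List.perm_cons_erase hmem2).cons a)
    rw [hperm.foldr_eq]
    have hlen : t.length = k - 1 := by
      have h1 : l.length = k + 1 := by simp [hl]
      have h2 : (l.erase a).length + 1 = l.length := List.length_erase_add_one hmem
      have h3 : t.length + 1 = (l.erase a).length := List.length_erase_add_one hmem2
      omega
    set R : MvPolynomial (Fin n) ℂ := t.foldr dirDeriv Q with hR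
    have hRA : R ∈ A := by
      have := hQp (fun i => t.get (Fin.cast hlen.symm i))
      rwa [ofFn_get_cast t (k - 1) hlen] at this
    have hR2 : R.IsHomogeneous 2 := hA R hRA
    have hR1 : (dirDeriv a R).IsHomogeneous 1 := IsHomogeneousDirDeriv hR2 a
    have hR0 : (dirDeriv a (dirDeriv a R)).IsHomogeneous 0 :=
      IsHomogeneousDirDeriv hR1 a
    -- the iterated derivative is `dirDeriv a (dirDeriv a R)`
    show eval x ((a :: a :: t).foldr dirDeriv Q) = 0
    have hfold : (a :: a :: t).foldr dirDeriv Q = dirDeriv a (dirDeriv a R) := rfl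
    rw [hfold, homog_zero_eval hR0 x a, euler hR1 a, euler hR2 a]
    obtain ⟨j0, hj0⟩ : ∃ j0, v (s j0) = a := by
      have := (List.mem_ofFn (f := fun j => v (s j)) (a := a)).mp (hl ▸ hmem)
      obtain ⟨j0, hj0⟩ := this
      exact ⟨j0, hj0⟩
    rw [← hj0, hv (s j0) R hRA]
    ring
  have hfac : ((k + 1).factorial : ℂ) ≠ 0 :=
    Nat.cast_ne_zero.mpr (Nat.factorial_ne_zero _)
  exact (mul_eq_zero.mp key).resolve_left hfac
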